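/- Let φ : ℝ → ℝ be continuous with φ(s) ≥ c > 0 for all s. Then the initial value problem α′(t) = φ(α(t)) for t > 0, α(0) = 0, has at most one solution α ∈ C([0,∞)) ∩ C¹((0,∞)); namely any solution satisfies ψ(α(t)) = t where ψ(r) = ∫₀^r ds/φ(s). -/

import Mathlib

open Set intervalIntegral

/-- uniqueness for `α′ = φ(α)`, `α(0) = 0` with `φ ≥ c > 0`:
any solution satisfies `ψ (α t) = t`, hence there is at most one solution. -/
theorem stmt4 (φ : ℝ → ℝ) (c : ℝ) (hc : 0 < c) (hφ : Continuous φ)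
    (hφc : ∀ s, c ≤ φ s)
    (ψ : ℝ → ℝ) (hψ : ∀ r, ψ r = ∫ s in (0:ℝ)..r, 1 / φ s) :
    (∀ α : ℝ → ℝ, ContinuousOn α (Ici 0) → α 0 = 0 →
      (∀ t > (0:ℝ), HasDerivAt α (φ (α t)) t) →
      ∀ t ≥ (0:ℝ), ψ (α t) = t) ∧
    (∀ α β : ℝ → ℝ, ContinuousOn α (Ici 0) → α 0 = 0 →
      (∀ t > (0:ℝ), HasDerivAt α (φ (α t)) t) →
      ContinuousOn β (Ici 0) → β 0 = 0 →
      (∀ t > (0:ℝ), HasDerivAt β (φ (β t)) t) →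
      ∀ t ≥ (0:ℝ), α t = β t) := by
  have hφpos : ∀ s, 0 < φ s := fun s => lt_of_lt_of_le hc (hφc s)
  have hφne : ∀ s, φ s ≠ 0 := fun s => (hφpos s).ne'
  have hinv : Continuous (fun s => 1 / φ s) := by
    simp only [one_div]; exact hφ.inv₀ hφne
  -- ψ has derivative 1/φ r at every r
  have hψderiv : ∀ r, HasDerivAt ψ (1 / φ r) r := by
    intro r
    have hfun : ψ = fun u => ∫ s in (0:ℝ)..u, 1 / φ s := funext hψ
    rw [hfun]
    exact intervalIntegral.integral_hasDerivAt_right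
      (hinv.intervalIntegrable _ _)
      (hinv.stronglyMeasurableAtFilter _ _)
      hinv.continuousAt
  have hψcont : Continuous ψ :=
    continuous_iff_continuousAt.2 fun r => (hψderiv r).continuousAt
  have hψ0 : ψ 0 = 0 := by rw [hψ]; simp
  have hψmono : StrictMono ψ := by
    apply strictMono_of_deriv_pos
    intro r
    rw [(hψderiv r).deriv]
    exact div_pos one_pos (hφpos r)
  have main : ∀ α : ℝ → ℝ, ContinuousOn α (Ici 0) → α 0 = 0 →
      (∀ t > (0:ℝ), HasDerivAt α (φ (α t)) t) →
      ∀ t ≥ (0:ℝ), ψ (α t) = t := by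
    intro α hαc hα0 hαd t ht
    rcases eq_or_lt_of_le ht with h0 | htpos
    · rw [← h0, hα0, hψ0]
    set h : ℝ → ℝ := fun s => ψ (α s) - s with hh
    have hhcont : ContinuousOn h (Ici 0) :=
      (hψcont.comp_continuousOn hαc).sub continuousOn_id
    have hconst : ∀ s ∈ Ioc (0:ℝ) t, h t = h s := by
      intro s hs
      have key : ∀ x ∈ Icc s t, h x = h s := by
        apply constant_of_has_deriv_right_zero
        · exact hhcont.mono (fun x hx => le_trans hs.1.le hx.1)
        · intro x hx
          have hx0 : 0 < x := lt_of_lt_of_le hs.1 hx.1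
          have : HasDerivAt h (1 / φ (α x) * φ (α x) - 1) x :=
            ((hψderiv (α x)).comp x (hαd x hx0)).sub (hasDerivAt_id x)
          rw [one_div, inv_mul_cancel₀ (hφne _), sub_self] at this
          exact this.hasDerivWithinAt
      exact key t ⟨hs.2, le_refl t⟩
    have hlim : Filter.Tendsto h (nhdsWithin 0 (Ioi 0)) (nhds (h 0)) :=
      ((hhcont 0 self_mem_Ici).mono Ioi_subset_Ici_self).tendsto
    have hlim2 : Filter.Tendsto h (nhdsWithin 0 (Ioi 0)) (nhds (h t)) := by
      apply Filter.Tendsto.congr' _ tendsto_const_nhds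
      filter_upwards [Ioc_mem_nhdsGT_of_mem ⟨le_refl 0, htpos⟩] with s hs
      exact hconst s hs
    have := tendsto_nhds_unique hlim2 hlim
    have h00 : h 0 = 0 := by simp [hh, hα0, hψ0]
    have : h t = 0 := this.trans h00
    have := sub_eq_zero.mp this
    linarith [this]
  refine ⟨main, ?_⟩
  intro α β hαc hα0 hαd hβc hβ0 hβd t ht
  have h1 := main α hαc hα0 hαd t ht
  have h2 := main β hβc hβ0 hβd t ht
  exact hψmono.injective (h1.trans h2.symm)
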